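/- Suppose γ_{j*} = 0 for some integer j* ≥ 2. Then n(ε,d) ≤ n(ε, j*−1) for all ε ∈ (0,1) and all d ∈ ℕ. -/
import Mathlib


open Filter Real Set Topology
open scoped ENNReal NNReal

noncomputable section

/-- The weighted eigenvalues `λ_{k,j}`: `1` if `j = 1`, and `γ_k · λ_j` if `j ≥ 2`. -/
def lamKJ (γ lam : ℕ → ℝ) (k j : ℕ) : ℝ := if j = 1 then 1 else γ k * lam j

/-- The information complexity `n(ε,d)`: the extended-natural cardinality of the set of
`d`-tuples of positive integers `(n_1,…,n_d)` with `λ_{1,n_1} ⋯ λ_{d,n_d} > ε²`. -/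
def infoN (γ lam : ℕ → ℝ) (ε : ℝ) (d : ℕ) : ℕ∞ :=
  {n : Fin d → ℕ | (∀ i, 1 ≤ n i) ∧ ε ^ 2 < ∏ i, lamKJ γ lam (i.1 + 1) (n i)}.encard

/-- EXP-SPT with a given exponent `p`: there is `C ≥ 0` with
`n(ε,d) ≤ C (1 + log ε⁻¹)^p` for all `d ≥ 1` and `ε ∈ (0,1]`. -/
def ExpSPTwith (γ lam : ℕ → ℝ) (p : ℝ) : Prop :=
  ∃ C : ℝ, 0 ≤ C ∧ ∀ d : ℕ, 1 ≤ d → ∀ ε : ℝ, 0 < ε → ε ≤ 1 →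
    (infoN γ lam ε d : ℝ≥0∞) ≤ ENNReal.ofReal (C * (1 + Real.log ε⁻¹) ^ p)

/-- Exponential strong polynomial tractability. -/
def ExpSPT (γ lam : ℕ → ℝ) : Prop := ∃ p : ℝ, 0 ≤ p ∧ ExpSPTwith γ lam p

/-- Exponential polynomial tractability: there are `C, q, p ≥ 0` with
`n(ε,d) ≤ C d^q (1 + log ε⁻¹)^p` for all `d ≥ 1` and `ε ∈ (0,1]`. -/
def ExpPT (γ lam : ℕ → ℝ) : Prop :=
  ∃ C q p : ℝ, 0 ≤ C ∧ 0 ≤ q ∧ 0 ≤ p ∧ ∀ d : ℕ, 1 ≤ d → ∀ ε : ℝ, 0 < ε → ε ≤ 1 →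
    (infoN γ lam ε d : ℝ≥0∞) ≤ ENNReal.ofReal (C * (d : ℝ) ^ q * (1 + Real.log ε⁻¹) ^ p)

/-- EXP-QPT with a given exponent `t`. -/
def ExpQPTwith (γ lam : ℕ → ℝ) (t : ℝ) : Prop :=
  ∃ C : ℝ, 0 ≤ C ∧ ∀ d : ℕ, 1 ≤ d → ∀ ε : ℝ, 0 < ε → ε ≤ 1 →
    (infoN γ lam ε d : ℝ≥0∞) ≤
      ENNReal.ofReal (C * Real.exp (t * (1 + Real.log d) * (1 + Real.log (1 + Real.log ε⁻¹))))

/-- Exponential quasi-polynomial tractability. -/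
def ExpQPT (γ lam : ℕ → ℝ) : Prop := ∃ t : ℝ, 0 ≤ t ∧ ExpQPTwith γ lam t

/-- Exponential `(s,t)`-weak tractability:
`log max(1, n(ε,d)) / (d^t + (1 + log ε⁻¹)^s) → 0` as `d + ε⁻¹ → ∞`
(in particular `n(ε,d)` is finite for all such `d, ε`). -/
def ExpSTWT (γ lam : ℕ → ℝ) (s t : ℝ) : Prop :=
  ∀ δ : ℝ, 0 < δ → ∃ T : ℝ, ∀ d : ℕ, 1 ≤ d → ∀ ε : ℝ, 0 < ε → ε ≤ 1 →
    T ≤ (d : ℝ) + ε⁻¹ →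
    ∃ N : ℕ, infoN γ lam ε d = (N : ℕ∞) ∧
      Real.log (max 1 (N : ℝ)) / ((d : ℝ) ^ t + (1 + Real.log ε⁻¹) ^ s) < δ

/-- `j(ε) = max { j ≥ 1 : λ_j > ε² }` (a well-defined maximum when `λ_j → 0`). -/
def jEps (lam : ℕ → ℝ) (ε : ℝ) : ℕ := sSup {j : ℕ | 1 ≤ j ∧ ε ^ 2 < lam j}

/-- `d(ε) = max { d ≥ 1 : γ_d > ε² }`, with `d(ε) = 0` if `γ_1 ≤ ε²`
(a well-defined maximum when `γ_d → 0`). -/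
def dEps (γ : ℕ → ℝ) (ε : ℝ) : ℕ := sSup {d : ℕ | 1 ≤ d ∧ ε ^ 2 < γ d}

/-- if γ_{j*} = 0 for some j* ≥ 2 (weights only assumed non-increasing with
0 ≤ γ_j ≤ 1), then n(ε,d) ≤ n(ε, j*−1) for all ε ∈ (0,1) and all d. -/
theorem stmt16 (γ lam : ℕ → ℝ)
    (hlam_anti : AntitoneOn lam (Set.Ici 1)) (hlam1 : lam 1 = 1) (hlam2 : 0 < lam 2)
    (hlam_nonneg : ∀ j, 1 ≤ j → 0 ≤ lam j)
    (hγ_anti : AntitoneOn γ (Set.Ici 1))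
    (hγ_nonneg : ∀ j, 1 ≤ j → 0 ≤ γ j) (hγ_le : ∀ j, 1 ≤ j → γ j ≤ 1)
    (jstar : ℕ) (hjstar : 2 ≤ jstar) (hγzero : γ jstar = 0) :
    ∀ ε : ℝ, 0 < ε → ε < 1 → ∀ d : ℕ, 1 ≤ d →
      infoN γ lam ε d ≤ infoN γ lam ε (jstar - 1) := by
  intro ε hε hε1 d hd
  set e := jstar - 1 with he
  have hee : e + 1 = jstar := by omega
  have he1 : 1 ≤ e := by omega
  have hγ0 : ∀ k, jstar ≤ k → γ k = 0 := by
    intro k hk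
    have h1 : γ k ≤ γ jstar := hγ_anti (by simp; omega) (by simp; omega) hk
    have h2 : 0 ≤ γ k := hγ_nonneg k (by omega)
    linarith
  have hεsq : 0 < ε ^ 2 := by positivity
  have hone : ∀ k, lamKJ γ lam k 1 = 1 := fun k => by simp [lamKJ]
  rcases le_or_gt d e with hde | hde
  · -- pad with 1's
    set f : (Fin d → ℕ) → (Fin e → ℕ) :=
      fun n i => if h : i.1 < d then n ⟨i.1, h⟩ else 1 with hf
    have hinj : Set.InjOn f Set.univ := by
      intro n _ n' _ hnn
      funext i
      have := congrFun hnn ⟨i.1, lt_of_lt_of_le i.2 hde⟩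
      simpa [hf, i.2.trans_le hde] using this
    unfold infoN
    calc _ = (f '' {n : Fin d → ℕ | (∀ i, 1 ≤ n i) ∧
          ε ^ 2 < ∏ i, lamKJ γ lam (i.1 + 1) (n i)}).encard := by
            rw [(hinj.mono (Set.subset_univ _)).encard_image]
      _ ≤ _ := by
          apply Set.encard_le_encard
          rintro - ⟨n, ⟨hn1, hn2⟩, rfl⟩
          refine ⟨fun i => ?_, ?_⟩
          · by_cases h : i.1 < d <;> simp [hf, h]
            exact hn1 _
          · set g : ℕ → ℝ :=
              fun i => lamKJ γ lam (i + 1) (if h : i < d then n ⟨i, h⟩ else 1) with hg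
            have h1 : (∏ i : Fin e, lamKJ γ lam (i.1 + 1) (f n i)) =
                ∏ i ∈ Finset.range e, g i := by
              rw [← Fin.prod_univ_eq_prod_range]
            have h2 : (∏ i : Fin d, lamKJ γ lam (i.1 + 1) (n i)) =
                ∏ i ∈ Finset.range d, g i := by
              rw [← Fin.prod_univ_eq_prod_range]
              exact Finset.prod_congr rfl fun i _ => by simp [hg, i.2]
            have h3 : ∀ i ∈ Finset.Ico d e, g i = 1 := by
              intro i hi
              simp only [Finset.mem_Ico] at hi
              simp [hg, Nat.not_lt.2 hi.1, hone]
            rw [h1, ← Finset.prod_range_mul_prod_Ico g hde,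
              Finset.prod_eq_one h3, mul_one, ← h2]
            exact hn2
  · -- truncate: coordinates ≥ e must be 1
    set f : (Fin d → ℕ) → (Fin e → ℕ) :=
      fun n i => n ⟨i.1, lt_of_lt_of_le i.2 hde.le⟩ with hf
    have hkey : ∀ n : Fin d → ℕ, (∀ i, 1 ≤ n i) →
        ε ^ 2 < (∏ i : Fin d, lamKJ γ lam (i.1 + 1) (n i)) →
        ∀ i : Fin d, e ≤ i.1 → n i = 1 := by
      intro n hn1 hn2 i hi
      by_contra hne
      have h2 : 2 ≤ n i := by have := hn1 i; omega
      have hz : lamKJ γ lam (i.1 + 1) (n i) = 0 := by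
        have : γ (i.1 + 1) = 0 := hγ0 _ (by omega)
        simp [lamKJ, this]; omega
      have : (∏ j : Fin d, lamKJ γ lam (j.1 + 1) (n j)) = 0 :=
        Finset.prod_eq_zero (Finset.mem_univ i) hz
      rw [this] at hn2; linarith
    have hinj : Set.InjOn f {n : Fin d → ℕ | (∀ i, 1 ≤ n i) ∧
        ε ^ 2 < ∏ i, lamKJ γ lam (i.1 + 1) (n i)} := by
      intro n hn n' hn' hnn
      funext i
      rcases lt_or_ge i.1 e with h | h
      · have := congrFun hnn ⟨i.1, h⟩
        simpa [hf] using this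
      · rw [hkey n hn.1 hn.2 i h, hkey n' hn'.1 hn'.2 i h]
    unfold infoN
    calc _ = (f '' {n : Fin d → ℕ | (∀ i, 1 ≤ n i) ∧
          ε ^ 2 < ∏ i, lamKJ γ lam (i.1 + 1) (n i)}).encard := by
            rw [hinj.encard_image]
      _ ≤ _ := by
          apply Set.encard_le_encard
          rintro - ⟨n, ⟨hn1, hn2⟩, rfl⟩
          refine ⟨fun i => hn1 _, ?_⟩
          set g : ℕ → ℝ :=
            fun i => lamKJ γ lam (i + 1) (if h : i < d then n ⟨i, h⟩ else 1) with hg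
          have h1 : (∏ i : Fin e, lamKJ γ lam (i.1 + 1) (f n i)) =
              ∏ i ∈ Finset.range e, g i := by
            rw [← Fin.prod_univ_eq_prod_range]
            exact Finset.prod_congr rfl fun i _ => by
              simp [hg, hf, lt_of_lt_of_le i.2 hde.le]
          have h2 : (∏ i : Fin d, lamKJ γ lam (i.1 + 1) (n i)) =
              ∏ i ∈ Finset.range d, g i := by
            rw [← Fin.prod_univ_eq_prod_range]
            exact Finset.prod_congr rfl fun i _ => by simp [hg, i.2]
          have h3 : ∀ i ∈ Finset.Ico e d, g i = 1 := by
            intro i hi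
            simp only [Finset.mem_Ico] at hi
            have := hkey n hn1 hn2 ⟨i, hi.2⟩ hi.1
            simp [hg, hi.2, this, hone]
          rw [h1]
          calc ε ^ 2 < ∏ i ∈ Finset.range d, g i := h2 ▸ hn2
            _ = (∏ i ∈ Finset.range e, g i) * ∏ i ∈ Finset.Ico e d, g i :=
              (Finset.prod_range_mul_prod_Ico g hde.le).symm
            _ = ∏ i ∈ Finset.range e, g i := by rw [Finset.prod_eq_one h3, mul_one]
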